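/- Let ξ > 0, c > 0, and let α : [1,∞) → ℝ be measurable, integrable on compact subintervals, with α(t) → 0 as t → ∞. Define Q(u) = (1−u)^{−ξ} · c · exp(∫_1^{1/(1−u)} α(t)/t dt) for u ∈ (0,1). Then for every sequence τ_n ∈ (0,1) with τ_n → 1, (1−τ_n)^{−1} · ∫_{τ_n}^1 Q(τ_n)/Q(u) du → 1/(1+ξ) as n → ∞. -/

import Mathlib

open MeasureTheory Real Filter

private lemma ff_int {α : ℝ → ℝ}
    (hint : ∀ a b : ℝ, 1 ≤ a → IntervalIntegrable α volume a b)
    {a b : ℝ} (ha : 1 ≤ a) (hb : 1 ≤ b) :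
    IntervalIntegrable (fun t => α t / t) volume a b := by
  have h : IntervalIntegrable (fun t => α t * t⁻¹) volume a b := by
    apply (hint a b ha).mul_continuousOn
    apply ContinuousOn.inv₀ continuousOn_id
    intro x hx
    have : (1:ℝ) ≤ x := le_trans (le_min ha hb) hx.1
    simp only [id]; intro h0; rw [h0] at this; linarith
  simpa [div_eq_mul_inv] using h

private lemma integ (τ p : ℝ) (hτ : τ < 1) (hp : 0 < p) :
    ∫ u in τ..1, ((1-u)/(1-τ)) ^ p = (1-τ)/(p+1) := by
  have h1τ : (0:ℝ) < 1 - τ := by linarith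
  have hne : ((1-τ):ℝ) ^ p ≠ 0 := (Real.rpow_pos_of_pos h1τ p).ne'
  have h1 : (∫ u in τ..1, ((1-u)/(1-τ)) ^ p)
      = ∫ x in (1-(1:ℝ))..(1-τ), (x/(1-τ)) ^ p :=
    intervalIntegral.integral_comp_sub_left (fun x => (x/(1-τ))^p) 1
  rw [h1, show (1:ℝ)-1 = 0 by ring]
  have h2 : (∫ x in (0:ℝ)..(1-τ), (x/(1-τ)) ^ p)
      = ∫ x in (0:ℝ)..(1-τ), x ^ p / (1-τ) ^ p := by
    apply intervalIntegral.integral_congr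
    intro x hx
    rw [Set.uIcc_of_le h1τ.le] at hx
    exact Real.div_rpow hx.1 h1τ.le p
  rw [h2, intervalIntegral.integral_div, integral_rpow (Or.inl (by linarith))]
  rw [Real.zero_rpow (by positivity), Real.rpow_add h1τ p 1, Real.rpow_one]
  field_simp
  ring

private lemma key (ξ c ε : ℝ) (hξ : 0 < ξ) (hc : 0 < c) (hε : 0 < ε) (hεξ : ε < ξ)
    (α : ℝ → ℝ)
    (hint : ∀ a b : ℝ, 1 ≤ a → IntervalIntegrable α volume a b)
    (Q : ℝ → ℝ)
    (hQ : ∀ u ∈ Set.Ioo (0:ℝ) 1,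
      Q u = (1 - u) ^ (-ξ) * c *
        Real.exp (∫ t in (1:ℝ)..(1 / (1 - u)), α t / t))
    (τ : ℝ) (hτ : τ ∈ Set.Ioo (0:ℝ) 1)
    (hsup : ∀ t, 1 / (1 - τ) ≤ t → |α t| ≤ ε) :
    (1 - τ)⁻¹ * (∫ u in τ..1, Q τ / Q u)
      ∈ Set.Icc (1/(1+ξ+ε)) (1/(1+ξ-ε)) := by
  obtain ⟨hτ0, hτ1⟩ := hτ
  have h1τ : (0:ℝ) < 1 - τ := by linarith
  have hT1 : (1:ℝ) ≤ 1 / (1 - τ) := one_le_one_div h1τ (by linarith)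
  -- facts about u in Ioo τ 1
  have hu_facts : ∀ u ∈ Set.Ioo τ 1, (0:ℝ) < 1 - u ∧ 1 / (1 - τ) ≤ 1 / (1 - u)
      ∧ (1:ℝ) ≤ 1 / (1 - u) := by
    intro u hu
    have h1u : (0:ℝ) < 1 - u := by linarith [hu.2]
    have h2 : 1 / (1 - τ) ≤ 1 / (1 - u) :=
      one_div_le_one_div_of_le h1u (by linarith [hu.1])
    exact ⟨h1u, h2, le_trans hT1 h2⟩
  -- ratio formula
  have hratio : ∀ u ∈ Set.Ioo τ 1, Q τ / Q u =
      ((1-u)/(1-τ)) ^ ξ *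
        Real.exp (-∫ t in (1/(1-τ))..(1/(1-u)), α t / t) := by
    intro u hu
    obtain ⟨h1u, hTu, hTu1⟩ := hu_facts u hu
    have hadj : (∫ t in (1:ℝ)..(1/(1-u)), α t / t)
        = (∫ t in (1:ℝ)..(1/(1-τ)), α t / t)
          + ∫ t in (1/(1-τ))..(1/(1-u)), α t / t :=
      (intervalIntegral.integral_add_adjacent_intervals
        (ff_int hint le_rfl hT1) (ff_int hint hT1 hTu1)).symm
    rw [hQ τ ⟨hτ0, hτ1⟩, hQ u ⟨lt_trans hτ0 hu.1, hu.2⟩, hadj]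
    rw [Real.exp_add, Real.rpow_neg h1τ.le, Real.rpow_neg h1u.le,
      Real.div_rpow h1u.le h1τ.le, Real.exp_neg]
    have e1 : Real.exp (∫ t in (1:ℝ)..(1/(1-τ)), α t / t) ≠ 0 := Real.exp_ne_zero _
    have e2 : Real.exp (∫ t in (1/(1-τ))..(1/(1-u)), α t / t) ≠ 0 := Real.exp_ne_zero _
    have p1 : ((1-τ):ℝ) ^ ξ ≠ 0 := (Real.rpow_pos_of_pos h1τ ξ).ne'
    have p2 : ((1-u):ℝ) ^ ξ ≠ 0 := (Real.rpow_pos_of_pos h1u ξ).ne'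
    field_simp
  -- exponent bound
  have hIbound : ∀ u ∈ Set.Ioo τ 1,
      |∫ t in (1/(1-τ))..(1/(1-u)), α t / t|
        ≤ ε * Real.log ((1-τ)/(1-u)) := by
    intro u hu
    obtain ⟨h1u, hTu, hTu1⟩ := hu_facts u hu
    have hint1 : IntervalIntegrable (fun t => |α t / t|) volume (1/(1-τ)) (1/(1-u)) :=
      (ff_int hint hT1 hTu1).abs
    have hint2 : IntervalIntegrable (fun t => ε / t) volume (1/(1-τ)) (1/(1-u)) := by
      apply ContinuousOn.intervalIntegrable
      apply ContinuousOn.div continuousOn_const continuousOn_id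
      intro x hx
      have : 1 / (1 - τ) ≤ x := by
        rw [Set.uIcc_of_le hTu] at hx; exact hx.1
      simp only [id]; intro h0; rw [h0] at this; linarith
    have step1 : |∫ t in (1/(1-τ))..(1/(1-u)), α t / t|
        ≤ ∫ t in (1/(1-τ))..(1/(1-u)), |α t / t| :=
      intervalIntegral.abs_integral_le_integral_abs hTu
    have step2 : (∫ t in (1/(1-τ))..(1/(1-u)), |α t / t|)
        ≤ ∫ t in (1/(1-τ))..(1/(1-u)), ε / t := by
      apply intervalIntegral.integral_mono_on hTu hint1 hint2
      intro t ht
      have ht0 : (0:ℝ) < t := lt_of_lt_of_le (by linarith) ht.1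
      rw [abs_div, abs_of_pos ht0]
      gcongr
      exact hsup t ht.1
    have step3 : (∫ t in (1/(1-τ))..(1/(1-u)), ε / t) = ε * Real.log ((1-τ)/(1-u)) := by
      have h0 : (0:ℝ) ∉ Set.uIcc (1/(1-τ)) (1/(1-u)) := by
        rw [Set.uIcc_of_le hTu]; intro h; have := h.1; linarith
      rw [intervalIntegral.integral_congr (g := fun t => ε * t⁻¹)
        (fun x _ => div_eq_mul_inv ε x), intervalIntegral.integral_const_mul,
        integral_inv h0]
      congr 1
      rw [one_div, one_div, inv_div_inv]
    calc |∫ t in (1/(1-τ))..(1/(1-u)), α t / t|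
        ≤ ∫ t in (1/(1-τ))..(1/(1-u)), |α t / t| := step1
      _ ≤ ∫ t in (1/(1-τ))..(1/(1-u)), ε / t := step2
      _ = ε * Real.log ((1-τ)/(1-u)) := step3
  -- pointwise squeeze, in terms of the explicit function
  have hsq : ∀ u ∈ Set.Ioo τ 1,
      ((1-u)/(1-τ)) ^ (ξ+ε) ≤ Q τ / Q u ∧ Q τ / Q u ≤ ((1-u)/(1-τ)) ^ (ξ-ε) := by
    intro u hu
    obtain ⟨h1u, hTu, hTu1⟩ := hu_facts u hu
    have hr0 : (0:ℝ) < (1-u)/(1-τ) := div_pos h1u h1τ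
    have hrlog : Real.log ((1-τ)/(1-u)) = -Real.log ((1-u)/(1-τ)) := by
      rw [← Real.log_inv]; congr 1; rw [inv_div]
    have hI := hIbound u hu
    rw [hrlog] at hI
    obtain ⟨hI1, hI2⟩ := abs_le.1 hI
    rw [hratio u hu]
    have hrpos : (0:ℝ) < ((1-u)/(1-τ)) ^ ξ := Real.rpow_pos_of_pos hr0 ξ
    constructor
    · have : Real.exp (Real.log ((1-u)/(1-τ)) * ε)
          ≤ Real.exp (-∫ t in (1/(1-τ))..(1/(1-u)), α t / t) := by
        apply Real.exp_le_exp.2; linarith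
      calc ((1-u)/(1-τ)) ^ (ξ+ε) = ((1-u)/(1-τ)) ^ ξ * ((1-u)/(1-τ)) ^ ε :=
            Real.rpow_add hr0 ξ ε
        _ = ((1-u)/(1-τ)) ^ ξ * Real.exp (Real.log ((1-u)/(1-τ)) * ε) := by
            rw [← Real.rpow_def_of_pos hr0]
        _ ≤ _ := by
            apply mul_le_mul_of_nonneg_left this hrpos.le
    · have : Real.exp (-∫ t in (1/(1-τ))..(1/(1-u)), α t / t)
          ≤ Real.exp (Real.log ((1-u)/(1-τ)) * (-ε)) := by
        apply Real.exp_le_exp.2; nlinarith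
      calc ((1-u)/(1-τ)) ^ ξ * Real.exp (-∫ t in (1/(1-τ))..(1/(1-u)), α t / t)
          ≤ ((1-u)/(1-τ)) ^ ξ * Real.exp (Real.log ((1-u)/(1-τ)) * (-ε)) :=
            mul_le_mul_of_nonneg_left this hrpos.le
        _ = ((1-u)/(1-τ)) ^ ξ * ((1-u)/(1-τ)) ^ (-ε) := by
            rw [← Real.rpow_def_of_pos hr0]
        _ = ((1-u)/(1-τ)) ^ (ξ-ε) := by
            rw [← Real.rpow_add hr0]; ring_nf
  -- continuity of the primitive on [T, ∞)
  have hFcont : ContinuousOn (fun x => ∫ t in (1/(1-τ))..x, α t / t)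
      (Set.Ici (1/(1-τ))) := by
    intro x₀ hx₀
    have hTx : 1/(1-τ) ≤ x₀ := hx₀
    have hx1 : (1:ℝ) ≤ x₀ + 1 := by linarith
    have hc1 : ContinuousOn (fun x => ∫ t in (1/(1-τ))..x, α t / t)
        (Set.uIcc (1/(1-τ)) (x₀+1)) :=
      intervalIntegral.continuousOn_primitive_interval' (ff_int hint hT1 hx1)
        Set.left_mem_uIcc
    have hx₀mem : x₀ ∈ Set.uIcc (1/(1-τ)) (x₀+1) := by
      rw [Set.uIcc_of_le (by linarith)]
      exact ⟨hTx, by linarith⟩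
    apply (hc1 x₀ hx₀mem).mono_of_mem_nhdsWithin
    have h1 : Set.Ici (1/(1-τ)) ∩ Set.Iio (x₀+1)
        ∈ nhdsWithin x₀ (Set.Ici (1/(1-τ))) :=
      Filter.inter_mem self_mem_nhdsWithin
        (mem_nhdsWithin_of_mem_nhds (Iio_mem_nhds (by linarith)))
    apply Filter.mem_of_superset h1
    rintro y ⟨hy1, hy2⟩
    rw [Set.uIcc_of_le (by linarith)]
    exact ⟨hy1, hy2.le⟩
  set G : ℝ → ℝ := fun u =>
    ((1-u)/(1-τ)) ^ ξ * Real.exp (-∫ t in (1/(1-τ))..(1/(1-u)), α t / t) with hG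
  have hbase : Continuous fun u : ℝ => (1-u)/(1-τ) :=
    (continuous_const.sub continuous_id).div_const _
  have hGcont : ContinuousOn G (Set.Ioo τ 1) := by
    apply ContinuousOn.mul
    · exact (hbase.rpow_const (fun x => Or.inr hξ.le)).continuousOn
    · apply Real.continuous_exp.comp_continuousOn
      apply ContinuousOn.neg
      apply hFcont.comp
      · apply ContinuousOn.div continuousOn_const
          (continuous_const.sub continuous_id).continuousOn
        intro u hu
        exact (hu_facts u hu).1.ne'
      · intro u hu
        exact Set.mem_Ici.2 (hu_facts u hu).2.1
  have hsqG : ∀ u ∈ Set.Ioo τ 1,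
      ((1-u)/(1-τ)) ^ (ξ+ε) ≤ G u ∧ G u ≤ ((1-u)/(1-τ)) ^ (ξ-ε) := by
    intro u hu
    have h := hsq u hu
    rwa [hratio u hu] at h
  have hGnn : ∀ u ∈ Set.Ioo τ 1, 0 ≤ G u := by
    intro u hu
    apply mul_nonneg (Real.rpow_nonneg ?_ _) (Real.exp_pos _).le
    have := (hu_facts u hu).1
    positivity
  have hUi : IntegrableOn (fun u => ((1-u)/(1-τ)) ^ (ξ-ε)) (Set.Ioo τ 1) :=
    ((hbase.rpow_const (fun x => Or.inr (by linarith))).integrableOn_Icc).mono_set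
      Set.Ioo_subset_Icc_self
  have hLi : IntegrableOn (fun u => ((1-u)/(1-τ)) ^ (ξ+ε)) (Set.Ioo τ 1) :=
    ((hbase.rpow_const (fun x => Or.inr (by linarith))).integrableOn_Icc).mono_set
      Set.Ioo_subset_Icc_self
  have hGi : IntegrableOn G (Set.Ioo τ 1) := by
    apply Integrable.mono' hUi (hGcont.aestronglyMeasurable measurableSet_Ioo)
    apply (ae_restrict_iff' measurableSet_Ioo).2
    apply Filter.Eventually.of_forall
    intro u hu
    rw [Real.norm_eq_abs, abs_of_nonneg (hGnn u hu)]
    exact (hsqG u hu).2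
  have hIoo : (∫ u in τ..1, Q τ / Q u) = ∫ u in Set.Ioo τ 1, G u := by
    rw [intervalIntegral.integral_of_le hτ1.le, integral_Ioc_eq_integral_Ioo]
    exact setIntegral_congr_fun measurableSet_Ioo (fun u hu => hratio u hu)
  have hlow : (∫ u in Set.Ioo τ 1, ((1-u)/(1-τ)) ^ (ξ+ε)) = (1-τ)/(ξ+ε+1) := by
    rw [← integral_Ioc_eq_integral_Ioo, ← intervalIntegral.integral_of_le hτ1.le]
    exact integ τ (ξ+ε) hτ1 (by linarith)
  have hupp : (∫ u in Set.Ioo τ 1, ((1-u)/(1-τ)) ^ (ξ-ε)) = (1-τ)/(ξ-ε+1) := by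
    rw [← integral_Ioc_eq_integral_Ioo, ← intervalIntegral.integral_of_le hτ1.le]
    exact integ τ (ξ-ε) hτ1 (by linarith)
  have h1 : (1-τ)/(ξ+ε+1) ≤ ∫ u in Set.Ioo τ 1, G u := by
    rw [← hlow]
    exact setIntegral_mono_on hLi hGi measurableSet_Ioo (fun u hu => (hsqG u hu).1)
  have h2 : (∫ u in Set.Ioo τ 1, G u) ≤ (1-τ)/(ξ-ε+1) := by
    rw [← hupp]
    exact setIntegral_mono_on hGi hUi measurableSet_Ioo (fun u hu => (hsqG u hu).2)
  rw [hIoo]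
  have hinv : (0:ℝ) ≤ (1-τ)⁻¹ := (inv_pos.2 h1τ).le
  constructor
  · have := mul_le_mul_of_nonneg_left h1 hinv
    refine le_trans (le_of_eq ?_) this
    field_simp
    ring
  · have := mul_le_mul_of_nonneg_left h2 hinv
    refine le_trans this (le_of_eq ?_)
    field_simp
    ring


/-- Population version of the localized statistic `g` at the approximate
Grimshaw solution: `(1−τ_n)⁻¹ ∫_{τ_n}^1 Q(τ_n)/Q(u) du → 1/(1+ξ)` for a
heavy-tailed Karamata quantile function with extreme value index `ξ > 0`. -/
theorem g_population_limit
    (ξ c : ℝ) (hξ : 0 < ξ) (hc : 0 < c)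
    (α : ℝ → ℝ) (hmeas : Measurable α)
    (hint : ∀ a b : ℝ, 1 ≤ a → IntervalIntegrable α volume a b)
    (hα : Filter.Tendsto α Filter.atTop (nhds 0))
    (Q : ℝ → ℝ)
    (hQ : ∀ u ∈ Set.Ioo (0:ℝ) 1,
      Q u = (1 - u) ^ (-ξ) * c *
        Real.exp (∫ t in (1:ℝ)..(1 / (1 - u)), α t / t))
    (τ : ℕ → ℝ) (hτ : ∀ n, τ n ∈ Set.Ioo (0:ℝ) 1)
    (hτ1 : Filter.Tendsto τ Filter.atTop (nhds 1)) :
    Filter.Tendsto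
      (fun n => (1 - τ n)⁻¹ * ∫ u in (τ n)..1, Q (τ n) / Q u)
      Filter.atTop (nhds (1 / (1 + ξ))) := by
  rw [Metric.tendsto_atTop]
  intro δ hδ
  set ε : ℝ := min (δ/2) (ξ/2) with hε_def
  have hε : 0 < ε := lt_min (by linarith) (by linarith)
  have hεξ : ε < ξ := lt_of_le_of_lt (min_le_right _ _) (by linarith)
  have hεδ : ε ≤ δ/2 := min_le_left _ _
  -- eventually |α t| ≤ ε for t ≥ M
  have hM : ∃ M : ℝ, ∀ t, M ≤ t → |α t| ≤ ε := by
    have := hα (Metric.closedBall_mem_nhds (0:ℝ) hε)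
    rw [Filter.mem_map, Filter.mem_atTop_sets] at this
    obtain ⟨M, hM⟩ := this
    exact ⟨M, fun t ht => by
      have := hM t ht
      simpa [Real.dist_eq] using this⟩
  obtain ⟨M, hM⟩ := hM
  -- 1/(1-τ n) → ∞
  have htend : Filter.Tendsto (fun n => 1/(1 - τ n)) Filter.atTop Filter.atTop := by
    have h0 : Filter.Tendsto (fun n => 1 - τ n) Filter.atTop (nhds 0) := by
      have := tendsto_const_nhds (x := (1:ℝ)) (f := Filter.atTop (α := ℕ)) |>.sub hτ1
      simpa using this
    have h0' : Filter.Tendsto (fun n => 1 - τ n) Filter.atTop (nhdsWithin 0 (Set.Ioi 0)) :=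
      tendsto_nhdsWithin_of_tendsto_nhds_of_eventually_within _ h0
        (Filter.Eventually.of_forall (fun n => by
          have := (hτ n).2; simp only [Set.mem_Ioi]; linarith))
    simpa [one_div, Pi.inv_def] using h0'.inv_tendsto_nhdsGT_zero
  have hev : ∀ᶠ n in Filter.atTop, M ≤ 1/(1 - τ n) := htend.eventually_ge_atTop M
  rw [Filter.eventually_atTop] at hev
  obtain ⟨N, hN⟩ := hev
  refine ⟨N, fun n hn => ?_⟩
  have hsup : ∀ t, 1/(1 - τ n) ≤ t → |α t| ≤ ε :=
    fun t ht => hM t (le_trans (hN n hn) ht)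
  have hmem := key ξ c ε hξ hc hε hεξ α hint Q hQ (τ n) (hτ n) hsup
  obtain ⟨hlo, hhi⟩ := hmem
  have hd1 : (1:ℝ) ≤ (1+ξ-ε) * (1+ξ) := by nlinarith
  have hd2 : (1:ℝ) ≤ (1+ξ) * (1+ξ+ε) := by nlinarith
  have hne1 : (1+ξ-ε) ≠ 0 := by nlinarith
  have hne2 : (1+ξ) ≠ 0 := by positivity
  have hne3 : (1+ξ+ε) ≠ 0 := by positivity
  have e1 : 1/(1+ξ-ε) - 1/(1+ξ) = ε / ((1+ξ-ε) * (1+ξ)) := by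
    field_simp
    ring
  have e2 : 1/(1+ξ) - 1/(1+ξ+ε) = ε / ((1+ξ) * (1+ξ+ε)) := by
    field_simp
    ring
  have b1 : 1/(1+ξ-ε) - 1/(1+ξ) ≤ ε := by
    rw [e1]; exact div_le_self hε.le hd1
  have b2 : 1/(1+ξ) - 1/(1+ξ+ε) ≤ ε := by
    rw [e2]; exact div_le_self hε.le hd2
  rw [Real.dist_eq, abs_sub_lt_iff]
  constructor <;> [skip; skip] <;> nlinarith
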